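/- arXiv:2002.08064 — 3 statements merged into one kernel-verified Lean document; each statement's English description precedes it below -/
import Mathlib

section
/- Suppose the intersection E = ∩_{i=1}^n E_i is nonempty, and let P_* denote the orthogonal projection of ℝ^d onto E. Then along the projection consensus recursion with 0 < ε < 1/n, the quantity Σ_{i=1}^n P_*(x_i(t)) is invariant in time: Σ_{i=1}^n P_*(x_i(t+1)) = Σ_{i=1}^n P_*(x_i(t)) for all t ≥ 0. -/
noncomputable section

open Filter MeasureTheory Finset

/-- The integer (0-indexed) associated with a Boolean vector `x ∈ {0,1}^m`:
`⌊x⌋ - 1 = ∑_{k=1}^m x_k 2^{m-k}` (so the 1-indexed `⌊x⌋` is `flr m x + 1`). -/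
def flr (m : ℕ) (x : Fin m → Bool) : ℕ :=
  ∑ k : Fin m, if x k then 2 ^ (m - 1 - (k : ℕ)) else 0

/-- `deltaVec c i` is the `i`-th column of the `c × c` identity matrix (0-indexed). -/
def deltaVec (c : ℕ) (i : Fin c) : Fin c → ℝ := fun j => if j = i then 1 else 0

/-- `Δ_c`, the set of Boolean vectors in `ℝ^c`. -/
def DeltaSet (c : ℕ) : Set (Fin c → ℝ) := Set.range (deltaVec c)

/-- `Θ_m : {0,1}^m → Δ_{2^m}`, `Θ_m(x) = δ_{2^m}^{⌊x⌋}`. -/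
def theta (m : ℕ) (x : Fin m → Bool) : Fin (2 ^ m) → ℝ :=
  fun j => if (j : ℕ) = flr m x then 1 else 0

/-- `Υ_m : Δ_{2^m} → {0,1}^m`, the inverse of `Θ_m`. -/
def upsilon (m : ℕ) : (Fin (2 ^ m) → ℝ) → (Fin m → Bool) :=
  Function.invFun (theta m)

/-- Euclidean distance on `ℝ^N`. -/
def euclDist {N : ℕ} (x y : Fin N → ℝ) : ℝ := Real.sqrt (∑ j, (x j - y j) ^ 2)

/-- Euclidean distance from a point to a set in `ℝ^N`. -/
def distToSet {N : ℕ} (z : Fin N → ℝ) (S : Set (Fin N → ℝ)) : ℝ :=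
  sInf (euclDist z '' S)

/-- `P` is the (orthogonal/metric) projection onto the set `S ⊆ ℝ^N`: it maps every point to
a nearest point of `S` in the Euclidean distance. -/
def IsProjOn {N : ℕ} (P : (Fin N → ℝ) → (Fin N → ℝ)) (S : Set (Fin N → ℝ)) : Prop :=
  ∀ z, P z ∈ S ∧ ∀ w ∈ S, euclDist z (P z) ≤ euclDist z w

/-- The uniform distribution on the cube `[0,1]^d`. -/
def uniformCube (d : ℕ) : Measure (Fin d → ℝ) :=
  volume.restrict (Set.univ.pi fun _ => Set.Icc (0 : ℝ) 1)

def iotaV (d : ℕ) : (Fin d → ℝ) ≃ₗ[ℝ] EuclideanSpace ℝ (Fin d) :=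
  (WithLp.linearEquiv 2 ℝ (Fin d → ℝ)).symm

lemma euclDist_eq {d : ℕ} (x y : Fin d → ℝ) : euclDist x y = ‖iotaV d x - iotaV d y‖ := by
  rw [euclDist, ← map_sub, EuclideanSpace.norm_eq]
  congr 1
  refine Finset.sum_congr rfl fun j _ => ?_
  have h : (iotaV d (x - y)) j = (x - y) j := rfl
  rw [h, Real.norm_eq_abs, sq_abs]
  rfl

lemma inner_eq_zero_of_min {E : Type*} [NormedAddCommGroup E] [InnerProductSpace ℝ E]
    (u w : E) (key : ∀ t : ℝ, ‖u‖ ^ 2 ≤ ‖u - t • w‖ ^ 2) :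
    (inner ℝ u w : ℝ) = 0 := by
  have key2 : ∀ t : ℝ, 2 * t * inner ℝ u w ≤ t ^ 2 * ‖w‖ ^ 2 := by
    intro t
    have h3 := key t
    rw [norm_sub_sq_real, real_inner_smul_right, norm_smul, mul_pow, Real.norm_eq_abs,
      sq_abs] at h3
    linarith
  by_cases hw0 : w = 0
  · simp [hw0]
  · set s : ℝ := ‖w‖ ^ 2 with hs
    have hwpos : (0:ℝ) < s := by
      have : 0 < ‖w‖ := norm_pos_iff.mpr hw0
      positivity
    set c : ℝ := inner ℝ u w with hc
    have h5 := key2 (c / s)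
    have e1 : 2 * (c / s) * c = 2 * (c ^ 2 / s) := by ring
    have e2 : (c / s) ^ 2 * s = c ^ 2 / s := by
      field_simp
    rw [e1, e2] at h5
    have h7 : c ^ 2 / s ≤ 0 := by linarith
    have h8 : (c ^ 2 / s) * s ≤ 0 := mul_nonpos_of_nonpos_of_nonneg h7 hwpos.le
    have h9 : (c ^ 2 / s) * s = c ^ 2 := by field_simp
    have h10 : c ^ 2 = 0 := le_antisymm (by linarith) (sq_nonneg c)
    exact pow_eq_zero_iff two_ne_zero |>.mp h10

lemma proj_orth {d : ℕ} {S : Set (Fin d → ℝ)} {P : (Fin d → ℝ) → (Fin d → ℝ)}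
    (hP : IsProjOn P S) (zz v : Fin d → ℝ)
    (hv : ∀ t : ℝ, P zz + t • v ∈ S) :
    (inner ℝ (iotaV d zz - iotaV d (P zz)) (iotaV d v) : ℝ) = 0 := by
  refine inner_eq_zero_of_min _ _ fun t => ?_
  have h1 := (hP zz).2 _ (hv t)
  rw [euclDist_eq, euclDist_eq] at h1
  have h2 : iotaV d (P zz + t • v) = iotaV d (P zz) + t • iotaV d v := by
    rw [map_add, _root_.map_smul]
  rw [h2] at h1
  have h3 : iotaV d zz - (iotaV d (P zz) + t • iotaV d v)
      = (iotaV d zz - iotaV d (P zz)) - t • iotaV d v := by abel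
  rw [h3] at h1
  have h0 : (0:ℝ) ≤ ‖iotaV d zz - iotaV d (P zz)‖ := norm_nonneg _
  nlinarith [norm_nonneg ((iotaV d zz - iotaV d (P zz)) - t • iotaV d v)]

lemma proj_unique {d : ℕ} {S : Set (Fin d → ℝ)} {P : (Fin d → ℝ) → (Fin d → ℝ)}
    (hP : IsProjOn P S) (zz c : Fin d → ℝ) (hc : c ∈ S)
    (horth : ∀ w ∈ S, (inner ℝ (iotaV d zz - iotaV d c) (iotaV d w - iotaV d c) : ℝ) = 0) :
    P zz = c := by
  have h1 : euclDist zz (P zz) ≤ euclDist zz c := (hP zz).2 c hc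
  rw [euclDist_eq, euclDist_eq] at h1
  have h2 : iotaV d zz - iotaV d (P zz)
      = (iotaV d zz - iotaV d c) - (iotaV d (P zz) - iotaV d c) := by abel
  rw [h2] at h1
  have ho : (inner ℝ (iotaV d zz - iotaV d c) (iotaV d (P zz) - iotaV d c) : ℝ) = 0 :=
    horth _ (hP zz).1
  have h3 : ‖(iotaV d zz - iotaV d c) - (iotaV d (P zz) - iotaV d c)‖ ^ 2
      = ‖iotaV d zz - iotaV d c‖ ^ 2 + ‖iotaV d (P zz) - iotaV d c‖ ^ 2 := by
    rw [norm_sub_sq_real, ho]; ring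
  have h6 : iotaV d (P zz) - iotaV d c = 0 := by
    have h7 : ‖iotaV d (P zz) - iotaV d c‖ = 0 := by
      nlinarith [norm_nonneg (iotaV d (P zz) - iotaV d c),
        norm_nonneg (iotaV d zz - iotaV d c),
        norm_nonneg ((iotaV d zz - iotaV d c) - (iotaV d (P zz) - iotaV d c))]
    exact norm_eq_zero.mp h7
  exact (iotaV d).injective (sub_eq_zero.mp h6)

theorem stmt3 (n d k : ℕ) (hn : 0 < n)
    (G : SimpleGraph (Fin n)) [DecidableRel G.Adj] (hG : G.Connected)
    (H : Fin n → Matrix (Fin k) (Fin d) ℝ) (z : Fin n → Fin k → ℝ)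
    (E : Fin n → Set (Fin d → ℝ))
    (hE : ∀ i, E i = {y | (H i).mulVec y = z i})
    (hEne : ∀ i, (E i).Nonempty)
    (hInt : (⋂ i, E i).Nonempty)
    (P : Fin n → (Fin d → ℝ) → (Fin d → ℝ))
    (hP : ∀ i, IsProjOn (P i) (E i))
    (Pstar : (Fin d → ℝ) → (Fin d → ℝ))
    (hPstar : IsProjOn Pstar (⋂ i, E i))
    (ε : ℝ) (hε0 : 0 < ε) (hε1 : ε < 1 / n)
    (x : ℕ → Fin n → Fin d → ℝ)
    (hx : ∀ t i, x (t + 1) i =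
      P i (x t i + ε • ∑ j ∈ G.neighborFinset i, (x t j - x t i))) :
    ∀ t : ℕ, ∑ i, Pstar (x (t + 1) i) = ∑ i, Pstar (x t i) := by
  intro t
  classical
  obtain ⟨p₀, hp₀⟩ := hInt
  have hp₀' : ∀ i, (H i).mulVec p₀ = z i := by
    intro i
    have h := Set.mem_iInter.mp hp₀ i
    rw [hE i] at h
    exact h
  set W : Submodule ℝ (EuclideanSpace ℝ (Fin d)) :=
    ⨅ i : Fin n, LinearMap.ker ((Matrix.mulVecLin (H i)).comp (iotaV d).symm.toLinearMap)
    with hWdef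
  have memW : ∀ v : EuclideanSpace ℝ (Fin d),
      v ∈ W ↔ ∀ i, (H i).mulVec ((iotaV d).symm v) = 0 := by
    intro v
    simp [hWdef, Submodule.mem_iInf, LinearMap.mem_ker]
  set Q := W.orthogonalProjectionOnto with hQdef
  set f : (Fin d → ℝ) → (Fin d → ℝ) := fun y =>
    p₀ + (iotaV d).symm ((Q (iotaV d y - iotaV d p₀) : W) : EuclideanSpace ℝ (Fin d)) with hf
  have hmulf : ∀ y i, (H i).mulVec (f y) = z i := by
    intro y i
    have h1 : (H i).mulVec ((iotaV d).symm
        ((Q (iotaV d y - iotaV d p₀) : W) : EuclideanSpace ℝ (Fin d))) = 0 :=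
      (memW _).mp (Q (iotaV d y - iotaV d p₀)).2 i
    rw [hf]
    simp only
    rw [Matrix.mulVec_add, hp₀' i, h1, add_zero]
  have hmemE : ∀ y, f y ∈ ⋂ i, E i := by
    intro y
    refine Set.mem_iInter.mpr fun i => ?_
    rw [hE i]
    exact hmulf y i
  have hWmem2 : ∀ w ∈ ⋂ i, E i, ∀ y, iotaV d w - iotaV d (f y) ∈ W := by
    intro w hw y
    rw [memW]
    intro i
    rw [map_sub, (iotaV d).symm_apply_apply, (iotaV d).symm_apply_apply,
      Matrix.mulVec_sub, hmulf y i]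
    have hwi : (H i).mulVec w = z i := by
      have h := Set.mem_iInter.mp hw i
      rwa [hE i] at h
    rw [hwi, sub_self]
  have key : ∀ y, Pstar y = f y := by
    intro y
    refine proj_unique hPstar y (f y) (hmemE y) ?_
    intro w hw
    have h1 : iotaV d y - iotaV d (f y)
        = (iotaV d y - iotaV d p₀) -
          ((Q (iotaV d y - iotaV d p₀) : W) : EuclideanSpace ℝ (Fin d)) := by
      rw [hf]
      simp only
      rw [map_add, (iotaV d).apply_symm_apply]
      abel
    have h2 : iotaV d y - iotaV d (f y) ∈ Wᗮ := by
      rw [h1, hQdef]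
      exact W.sub_starProjection_mem_orthogonal _
    have h3 := hWmem2 w hw y
    have h4 := (Submodule.mem_orthogonal W _).mp h2 _ h3
    rw [real_inner_comm]
    exact h4
  have step1 : ∀ i y, Pstar (P i y) = Pstar y := by
    intro i y
    rw [key, key]
    have hz : iotaV d y - iotaV d (P i y) ∈ Wᗮ := by
      rw [Submodule.mem_orthogonal]
      intro u hu
      have hv : ∀ s : ℝ, P i y + s • (iotaV d).symm u ∈ E i := by
        intro s
        rw [hE i]
        show (H i).mulVec _ = z i
        rw [Matrix.mulVec_add, Matrix.mulVec_smul]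
        have e1 : (H i).mulVec (P i y) = z i := by
          have h := (hP i y).1
          rwa [hE i] at h
        have e2 : (H i).mulVec ((iotaV d).symm u) = 0 := (memW u).mp hu i
        rw [e1, e2, smul_zero, add_zero]
      have h := proj_orth (hP i) y ((iotaV d).symm u) hv
      rw [(iotaV d).apply_symm_apply] at h
      rw [real_inner_comm]
      exact h
    have hQ0 : Q (iotaV d y - iotaV d (P i y)) = 0 :=
      Submodule.orthogonalProjectionOnto_apply_of_mem_orthogonal hz
    have hdiff : Q (iotaV d y - iotaV d p₀) - Q (iotaV d (P i y) - iotaV d p₀) = 0 := by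
      rw [← map_sub]
      have e : (iotaV d y - iotaV d p₀) - (iotaV d (P i y) - iotaV d p₀)
          = iotaV d y - iotaV d (P i y) := by abel
      rw [e, hQ0]
    have heq : Q (iotaV d (P i y) - iotaV d p₀) = Q (iotaV d y - iotaV d p₀) :=
      (sub_eq_zero.mp hdiff).symm
    rw [hf]
    simp only
    rw [heq]
  -- zero-sum of the graph Laplacian term
  have hsum0 : ∑ i : Fin n, ∑ j ∈ G.neighborFinset i, (x t j - x t i) = 0 := by
    have hfilter : ∀ i, G.neighborFinset i = Finset.univ.filter (G.Adj i) := by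
      intro i
      ext j
      simp [SimpleGraph.mem_neighborFinset]
    have hswap : ∑ i : Fin n, ∑ j ∈ G.neighborFinset i, x t j
        = ∑ i : Fin n, ∑ j ∈ G.neighborFinset i, x t i := by
      simp only [hfilter, Finset.sum_filter]
      rw [Finset.sum_comm]
      refine Finset.sum_congr rfl fun j _ => Finset.sum_congr rfl fun i _ => ?_
      exact if_congr (G.adj_comm i j) rfl rfl
    calc ∑ i : Fin n, ∑ j ∈ G.neighborFinset i, (x t j - x t i)
        = (∑ i : Fin n, ∑ j ∈ G.neighborFinset i, x t j)
          - ∑ i : Fin n, ∑ j ∈ G.neighborFinset i, x t i := by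
          rw [← Finset.sum_sub_distrib]
          refine Finset.sum_congr rfl fun i _ => ?_
          rw [← Finset.sum_sub_distrib]
      _ = 0 := by rw [hswap, sub_self]
  have hys : ∑ i : Fin n, (x t i + ε • ∑ j ∈ G.neighborFinset i, (x t j - x t i))
      = ∑ i : Fin n, x t i := by
    rw [Finset.sum_add_distrib, ← Finset.smul_sum, hsum0, smul_zero, add_zero]
  have main : ∀ yy : Fin n → Fin d → ℝ, ∑ i, f (yy i)
      = (n • p₀)
        + (iotaV d).symm ((∑ i : Fin n, Q (iotaV d (yy i) - iotaV d p₀) : W) :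
            EuclideanSpace ℝ (Fin d)) := by
    intro yy
    rw [hf]
    simp only
    rw [Finset.sum_add_distrib, Finset.sum_const, Finset.card_fin]
    congr 1
    rw [Submodule.coe_sum, map_sum]
  calc ∑ i, Pstar (x (t + 1) i)
      = ∑ i, Pstar (x t i + ε • ∑ j ∈ G.neighborFinset i, (x t j - x t i)) := by
        refine Finset.sum_congr rfl fun i _ => ?_
        rw [hx t i, step1]
    _ = ∑ i, Pstar (x t i) := by
        simp only [key]
        rw [main, main]
        have hQeq : (∑ i : Fin n,
              Q (iotaV d (x t i + ε • ∑ j ∈ G.neighborFinset i, (x t j - x t i))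
                - iotaV d p₀))
            = ∑ i : Fin n, Q (iotaV d (x t i) - iotaV d p₀) := by
          rw [← map_sum Q, ← map_sum Q]
          congr 1
          rw [Finset.sum_sub_distrib, Finset.sum_sub_distrib, ← map_sum, ← map_sum, ← map_sum, hys]
        rw [hQeq]
end
end

section
/- Let f_i : {0,1}^m → {0,1} and σ_i ∈ {0,1} for i = 1,…,n, let χ_0 = Card{(f_1(x),…,f_n(x)) : x ∈ {0,1}^m}, and suppose E^b is nonempty. Then the dimension of the affine subspace E^b satisfies dim(E^b) ≥ 2^m − χ_0. -/
noncomputable section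

open Filter MeasureTheory Finset

def flrEquiv (m : ℕ) : (Fin m → Bool) ≃ Fin (2 ^ m) :=
  ((Equiv.piCongrLeft' (fun _ => Bool) (Fin.revPerm)).trans
    (Equiv.piCongrRight fun _ => finTwoEquiv.symm)).trans finFunctionFinEquiv

lemma flrEquiv_val {m : ℕ} (x : Fin m → Bool) : ((flrEquiv m x : Fin (2^m)) : ℕ) = flr m x := by
  have h2 : ∀ b : Bool, ((finTwoEquiv.symm b : Fin 2) : ℕ) = if b then 1 else 0 := by decide
  simp only [flrEquiv, Equiv.trans_apply, finFunctionFinEquiv_apply, Equiv.piCongrRight_apply,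
    Pi.map_apply, Equiv.piCongrLeft'_apply, h2]
  rw [flr, ← Equiv.sum_comp (Fin.revPerm (n := m))]
  refine Finset.sum_congr rfl fun i _ => ?_
  have hrev : ((Fin.revPerm i : Fin m) : ℕ) = m - 1 - (i : ℕ) := by
    have := i.isLt; simp [Fin.val_rev]; omega
  rw [Equiv.symm_apply_apply, hrev]
  rcases x i <;> simp

lemma theta_eq {m : ℕ} (x : Fin m → Bool) (j : Fin (2^m)) :
    theta m x j = if j = flrEquiv m x then 1 else 0 := by
  rw [theta, ← flrEquiv_val x]
  simp [Fin.ext_iff]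

lemma flr_one (b : Bool) : flr 1 (fun _ => b) = if b then 1 else 0 := by
  rcases b <;> simp [flr]

theorem stmt12 (m n : ℕ) (hm : 0 < m)
    (f : Fin n → (Fin m → Bool) → Bool) (σ : Fin n → Bool)
    (M : Fin n → Matrix (Fin 2) (Fin (2 ^ m)) ℝ)
    (hM : ∀ i x, (M i).mulVec (theta m x) = theta 1 (fun _ => f i x))
    (χ₀ : ℕ) (hχ₀ : χ₀ = (Set.range fun x : Fin m → Bool => fun i => f i x).ncard)
    (EbA : AffineSubspace ℝ (Fin (2 ^ m) → ℝ))
    (hEbA : (EbA : Set (Fin (2 ^ m) → ℝ)) =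
      {y | ∀ i, (M i).mulVec y = theta 1 (fun _ => σ i)})
    (hne : (EbA : Set (Fin (2 ^ m) → ℝ)).Nonempty) :
    2 ^ m - χ₀ ≤ Module.finrank ℝ EbA.direction := by
  classical
  set patt : (Fin m → Bool) → (Fin n → Bool) := fun x i => f i x with hpatt
  set R : Set (Fin n → Bool) := Set.range patt with hR
  haveI : Fintype R := Set.fintypeRange patt
  set E := flrEquiv m with hE
  -- entries of M
  have hMentry : ∀ (i : Fin n) (i' : Fin 2) (x : Fin m → Bool),
      M i i' (E x) = if (i' : ℕ) = (if f i x then 1 else 0) then 1 else 0 := by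
    intro i i' x
    have h := congrFun (hM i x) i'
    rw [theta, flr_one] at h
    rw [← h, Matrix.mulVec, dotProduct]
    have : ∀ j, theta m x j = if j = E x then 1 else 0 := fun j => theta_eq x j
    simp only [this, mul_ite, mul_one, mul_zero]
    simp
  -- the stacked linear map
  set T : (Fin (2^m) → ℝ) →ₗ[ℝ] (Fin n → Fin 2 → ℝ) :=
    LinearMap.pi (fun i => (M i).mulVecLin) with hT
  -- direction = kernel of T
  obtain ⟨p, hp⟩ := hne
  have hdir : EbA.direction = LinearMap.ker T := by
    apply le_antisymm
    · intro v hv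
      rcases (AffineSubspace.mem_direction_iff_eq_vsub ⟨p, hp⟩ v).1 hv with ⟨a, ha, b, hb, rfl⟩
      rw [← AffineSubspace.mem_coe, hEbA] at ha hb
      rw [LinearMap.mem_ker]
      funext i
      have : a -ᵥ b = a - b := rfl
      simp only [hT, LinearMap.pi_apply, this, Matrix.mulVecLin_apply, Matrix.mulVec_sub,
        ha i, hb i, sub_self, Pi.zero_apply]
    · intro v hv
      rw [LinearMap.mem_ker] at hv
      have hv' : ∀ i, (M i).mulVec v = 0 := fun i => congrFun hv i
      have hmem : v +ᵥ p ∈ EbA := by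
        rw [← AffineSubspace.mem_coe, hEbA]
        intro i
        have : v +ᵥ p = v + p := rfl
        rw [this, Matrix.mulVec_add, hv' i, zero_add]
        have := hp; rw [hEbA] at this; exact this i
      have : v = (v +ᵥ p) -ᵥ p := by simp
      rw [this]
      exact AffineSubspace.vsub_mem_direction hmem hp
  -- factorization through pattern space
  set Q : (Fin (2^m) → ℝ) →ₗ[ℝ] (R → ℝ) :=
    LinearMap.pi (fun q => ∑ x ∈ univ.filter (fun x => patt x = (q : Fin n → Bool)),
      LinearMap.proj (E x)) with hQ
  set S : (R → ℝ) →ₗ[ℝ] (Fin n → Fin 2 → ℝ) :=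
    LinearMap.pi (fun i => LinearMap.pi (fun i' =>
      ∑ q : R, (if (i' : ℕ) = (if (q : Fin n → Bool) i then 1 else 0) then (1:ℝ) else 0) •
        LinearMap.proj q)) with hS
  have hfac : T = S.comp Q := by
    apply LinearMap.ext; intro y
    funext i i'
    simp only [hT, hS, hQ, LinearMap.pi_apply, LinearMap.comp_apply, Matrix.mulVecLin_apply,
      LinearMap.sum_apply, LinearMap.smul_apply, LinearMap.proj_apply, smul_eq_mul]
    rw [Matrix.mulVec, dotProduct, ← Equiv.sum_comp E (fun j => M i i' j * y j)]
    rw [← Finset.sum_fiberwise univ (fun x => (⟨patt x, Set.mem_range_self x⟩ : R))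
      (fun x => M i i' (E x) * y (E x))]
    refine Finset.sum_congr rfl fun q _ => ?_
    rw [Finset.mul_sum]
    refine Finset.sum_congr ?_ fun x hx => ?_
    · apply Finset.filter_congr; intro x _; simp [Subtype.ext_iff]
    · rw [Finset.mem_filter] at hx
      rw [hMentry i i' x]
      have hq : (q : Fin n → Bool) i = f i x := by rw [← hx.2]
      rw [hq]
  -- rank bound
  have hcard : Fintype.card R = χ₀ := by
    rw [hχ₀, ← Nat.card_coe_set_eq, Nat.card_eq_fintype_card]
  have hrank : Module.finrank ℝ (LinearMap.range T) ≤ χ₀ := by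
    rw [hfac]
    calc Module.finrank ℝ (LinearMap.range (S.comp Q))
        ≤ Module.finrank ℝ (LinearMap.range S) :=
          Submodule.finrank_mono (LinearMap.range_comp_le_range Q S)
      _ ≤ Module.finrank ℝ (R → ℝ) := LinearMap.finrank_range_le S
      _ = Fintype.card R := Module.finrank_fintype_fun_eq_card ℝ
      _ = χ₀ := hcard
  have hrn := LinearMap.finrank_range_add_finrank_ker T
  rw [Module.finrank_fintype_fun_eq_card, Fintype.card_fin] at hrn
  rw [hdir]
  omega
end
end

section
/- Let G be a simple, undirected, connected graph on n nodes, 0 < ε < 1/n, and let W ∈ ℝ^{n×n} be defined by W_{ij} = ε for {i,j} ∈ E(G), W_{ii} = 1 − |N_i|ε, and W_{ij} = 0 otherwise. For i = 1,…,n let P_i : ℝ^d → ℝ^d be the orthogonal projection onto a linear subspace L_i ⊆ ℝ^d, let P = diag(P_1,…,P_n) act blockwise on ℝ^{nd}, and let W act blockwise as (Wu)_i = Σ_j W_{ij} u_j. Then: (A) every eigenvalue λ of the linear map PW on ℝ^{nd} with λ ≠ 1 satisfies |λ| < 1; and (B) every eigenvector of PW corresponding to eigenvalue 1 has the form 1_n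 ⊗ h for some h ∈ ∩_{i=1}^n L_i, i.e., all n blocks are equal to a common vector fixed by each P_i. -/
noncomputable section

open Filter MeasureTheory Finset

lemma dist_sq_le' {N : ℕ} {x y z w : Fin N → ℝ} (h : euclDist x y ≤ euclDist z w) :
    ∑ j, (x j - y j)^2 ≤ ∑ j, (z j - w j)^2 := by
  have h2 : (0:ℝ) ≤ ∑ j, (z j - w j)^2 := Finset.sum_nonneg fun j _ => sq_nonneg _
  unfold euclDist at h
  exact (Real.sqrt_le_sqrt_iff h2).mp h

lemma proj_inner {N : ℕ} {P : (Fin N → ℝ) → (Fin N → ℝ)} {L : Submodule ℝ (Fin N → ℝ)}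
    (hP : IsProjOn P (L : Set (Fin N → ℝ))) (v : Fin N → ℝ) {w : Fin N → ℝ} (hw : w ∈ L) :
    ∑ a, (v a - P v a) * w a = 0 := by
  set a : ℝ := ∑ j, (v j - P v j) * w j with ha
  set b : ℝ := ∑ j, (w j)^2 with hb
  have hb0 : 0 ≤ b := Finset.sum_nonneg fun j _ => sq_nonneg _
  have key : ∀ t : ℝ, 0 ≤ -2*t*a + t^2*b := by
    intro t
    have hmem : P v + t • w ∈ L := L.add_mem (hP v).1 (L.smul_mem t hw)
    have hle := (hP v).2 _ hmem
    have h2 := dist_sq_le' hle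
    have expand : ∑ j, (v j - (P v + t • w) j)^2
        = ∑ j, (v j - P v j)^2 + (-2*t*a + t^2*b) := by
      rw [ha, hb, Finset.mul_sum, Finset.mul_sum, ← Finset.sum_add_distrib,
        ← Finset.sum_add_distrib]
      apply Finset.sum_congr rfl
      intro j _
      simp only [Pi.add_apply, Pi.smul_apply, smul_eq_mul]
      ring
    rw [expand] at h2
    linarith
  by_contra hne
  have hane : a ≠ 0 := hne
  have hbpos : 0 < b := by
    rcases lt_or_eq_of_le hb0 with h | h
    · exact h
    · exfalso
      have hw0 : ∀ j, w j = 0 := by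
        intro j
        have := (Finset.sum_eq_zero_iff_of_nonneg (fun j _ => sq_nonneg (w j))).mp h.symm j
          (Finset.mem_univ j)
        exact pow_eq_zero_iff (by norm_num) |>.mp this
      apply hane
      rw [ha]
      apply Finset.sum_eq_zero
      intro j _
      rw [hw0 j, mul_zero]
  have h1 := key (a / b)
  have hc : -2*(a/b)*a + (a/b)^2*b = -(a^2/b) := by field_simp; ring
  rw [hc] at h1
  have hpos : 0 < a^2/b := div_pos (by positivity) hbpos
  linarith

lemma proj_pyth {N : ℕ} {P : (Fin N → ℝ) → (Fin N → ℝ)} {L : Submodule ℝ (Fin N → ℝ)}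
    (hP : IsProjOn P (L : Set (Fin N → ℝ))) (v : Fin N → ℝ) :
    ∑ a, (v a)^2 = ∑ a, (P v a)^2 + ∑ a, (v a - P v a)^2 := by
  have hinner := proj_inner hP v (hP v).1
  have expand : ∀ a, (v a)^2 = (P v a)^2 + (v a - P v a)^2 + 2 * ((v a - P v a) * P v a) := by
    intro a; ring
  calc ∑ a, (v a)^2 = ∑ a, ((P v a)^2 + (v a - P v a)^2 + 2 * ((v a - P v a) * P v a)) :=
        Finset.sum_congr rfl fun a _ => expand a
    _ = ∑ a, (P v a)^2 + ∑ a, (v a - P v a)^2 + 2 * ∑ a, (v a - P v a) * P v a := by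
        rw [Finset.sum_add_distrib, Finset.sum_add_distrib, ← Finset.mul_sum]
    _ = ∑ a, (P v a)^2 + ∑ a, (v a - P v a)^2 := by rw [hinner]; ring

lemma proj_le {N : ℕ} {P : (Fin N → ℝ) → (Fin N → ℝ)} {L : Submodule ℝ (Fin N → ℝ)}
    (hP : IsProjOn P (L : Set (Fin N → ℝ))) (v : Fin N → ℝ) :
    ∑ a, (P v a)^2 ≤ ∑ a, (v a)^2 := by
  rw [proj_pyth hP v]
  have : (0:ℝ) ≤ ∑ a, (v a - P v a)^2 := Finset.sum_nonneg fun a _ => sq_nonneg _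
  linarith

lemma proj_eq {N : ℕ} {P : (Fin N → ℝ) → (Fin N → ℝ)} {L : Submodule ℝ (Fin N → ℝ)}
    (hP : IsProjOn P (L : Set (Fin N → ℝ))) (v : Fin N → ℝ)
    (heq : ∑ a, (P v a)^2 = ∑ a, (v a)^2) : P v = v := by
  have h := proj_pyth hP v
  have h0 : ∑ a, (v a - P v a)^2 = 0 := by linarith
  funext a
  have h1 := (Finset.sum_eq_zero_iff_of_nonneg (fun a _ => sq_nonneg (v a - P v a))).mp h0 a
    (Finset.mem_univ a)
  have h2 := pow_eq_zero_iff (n := 2) (by norm_num) |>.mp h1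
  linarith

lemma W_identity {n : ℕ} (W : Matrix (Fin n) (Fin n) ℝ)
    (hrow : ∀ i, ∑ j, W i j = 1) (hcol : ∀ j, ∑ i, W i j = 1) (x : Fin n → ℝ) :
    ∑ j, (x j)^2 = ∑ i, (W.mulVec x i)^2 + ∑ i, ∑ j, W i j * (x j - W.mulVec x i)^2 := by
  have hrw : ∀ i, ∑ j, W i j * (x j - W.mulVec x i)^2
      = ∑ j, W i j * (x j)^2 - (W.mulVec x i)^2 := by
    intro i
    have hm : W.mulVec x i = ∑ j, W i j * x j := by
      simp [Matrix.mulVec, dotProduct]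
    have e0 : ∑ j, W i j * (x j - W.mulVec x i)^2
        = ∑ j, (W i j * (x j)^2 - 2 * W.mulVec x i * (W i j * x j) + (W.mulVec x i)^2 * W i j) :=
      Finset.sum_congr rfl fun j _ => by ring
    rw [e0, Finset.sum_add_distrib, Finset.sum_sub_distrib, ← Finset.mul_sum, ← Finset.mul_sum,
      ← hm, hrow i]
    ring
  have hswap : ∑ i, ∑ j, W i j * (x j)^2 = ∑ j, (x j)^2 := by
    rw [Finset.sum_comm]
    apply Finset.sum_congr rfl
    intro j _
    rw [← Finset.sum_mul, hcol j, one_mul]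
  calc ∑ j, (x j)^2
      = ∑ i, (W.mulVec x i)^2 + (∑ i, (∑ j, W i j * (x j)^2 - (W.mulVec x i)^2)) := by
        rw [Finset.sum_sub_distrib, hswap]; ring
    _ = _ := by rw [Finset.sum_congr rfl fun i _ => (hrw i).symm]

lemma const_of_adj {n : ℕ} {G : SimpleGraph (Fin n)} (hG : G.Connected)
    {x : Fin n → ℝ} (h : ∀ i j, G.Adj i j → x i = x j) : ∀ i j, x i = x j := by
  have key : ∀ {i j : Fin n} (w : G.Walk i j), x i = x j := by
    intro i j w
    induction w with
    | nil => rfl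
    | cons hadj p ih => exact (h _ _ hadj).trans ih
  intro i j
  obtain ⟨w⟩ := hG i j
  exact key w

theorem stmt17 (n d : ℕ) (hn : 0 < n)
    (G : SimpleGraph (Fin n)) [DecidableRel G.Adj] (hG : G.Connected)
    (ε : ℝ) (hε0 : 0 < ε) (hε1 : ε < 1 / n)
    (W : Matrix (Fin n) (Fin n) ℝ)
    (hW : ∀ i j, W i j =
      if i = j then 1 - (G.neighborFinset i).card * ε
      else if G.Adj i j then ε else 0)
    (L : Fin n → Submodule ℝ (Fin d → ℝ))
    (Pm : Fin n → Matrix (Fin d) (Fin d) ℝ)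
    (hP : ∀ i, IsProjOn (fun v => (Pm i).mulVec v) (L i : Set (Fin d → ℝ)))
    (A : Matrix (Fin n × Fin d) (Fin n × Fin d) ℝ)
    (hA : ∀ p q, A p q = W p.1 q.1 * Pm p.1 p.2 q.2) :
    (∀ lam : ℂ,
      Module.End.HasEigenvalue ((A.map fun r => (r : ℂ)).mulVecLin) lam →
        lam ≠ 1 → ‖lam‖ < 1) ∧
    (∀ u : Fin n × Fin d → ℝ, A.mulVec u = u →
      ∃ h : Fin d → ℝ, (∀ i, h ∈ L i) ∧ ∀ p : Fin n × Fin d, u p = h p.2) := by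
  classical
  -- basic facts about W
  have hn' : (0:ℝ) < n := by exact_mod_cast hn
  have hdeg : ∀ i : Fin n, ((G.neighborFinset i).card : ℝ) * ε < 1 := by
    intro i
    have hcard : (G.neighborFinset i).card ≤ n := by
      simpa using Finset.card_le_card (Finset.subset_univ (G.neighborFinset i))
    have h1 : ((G.neighborFinset i).card : ℝ) ≤ n := by exact_mod_cast hcard
    have h2 : ((G.neighborFinset i).card : ℝ) * ε ≤ n * ε :=
      mul_le_mul_of_nonneg_right h1 (le_of_lt hε0)
    have h3 : (n:ℝ) * ε < n * (1/n) := mul_lt_mul_of_pos_left hε1 hn'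
    have h4 : (n:ℝ) * (1/n) = 1 := by field_simp
    linarith
  have hWdiag : ∀ i, 0 < W i i := by
    intro i; rw [hW i i, if_pos rfl]; linarith [hdeg i]
  have hWnn : ∀ i j, 0 ≤ W i j := by
    intro i j; rw [hW i j]
    split_ifs with h1 h2
    · have := hdeg i
      have : ((G.neighborFinset j).card : ℝ) * ε < 1 := by rw [← h1]; exact hdeg i
      linarith [hdeg i]
    · exact le_of_lt hε0
    · exact le_refl _
  have hWadj : ∀ i j, G.Adj i j → W i j = ε := by
    intro i j hadj
    rw [hW i j, if_neg (G.ne_of_adj hadj), if_pos hadj]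
  have hWrow : ∀ i, ∑ j, W i j = 1 := by
    intro i
    rw [← Finset.add_sum_erase _ _ (Finset.mem_univ i)]
    have e1 : ∑ j ∈ Finset.univ.erase i, W i j
        = ∑ j ∈ Finset.univ.erase i, (if G.Adj i j then ε else 0) := by
      apply Finset.sum_congr rfl
      intro j hj
      rw [hW i j, if_neg (fun h => (Finset.ne_of_mem_erase hj) h.symm)]
    have e2 : ∑ j ∈ Finset.univ.erase i, (if G.Adj i j then ε else 0)
        = ((G.neighborFinset i).card : ℝ) * ε := by
      rw [Finset.sum_erase (f := fun j => if G.Adj i j then ε else 0) (a := i)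
        Finset.univ (by simp)]
      rw [← Finset.sum_filter, ← SimpleGraph.neighborFinset_eq_filter,
        Finset.sum_const, nsmul_eq_mul]
    rw [e1, e2, hW i i, if_pos rfl]
    ring
  have hWsymm : ∀ i j, W i j = W j i := by
    intro i j
    rw [hW i j, hW j i]
    by_cases h : i = j
    · subst h; rfl
    · rw [if_neg h, if_neg (Ne.symm h)]
      by_cases h2 : G.Adj i j
      · rw [if_pos h2, if_pos h2.symm]
      · rw [if_neg h2, if_neg (fun h3 => h2 h3.symm)]
  have hWcol : ∀ j, ∑ i, W i j = 1 := by
    intro j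
    calc ∑ i, W i j = ∑ i, W j i := Finset.sum_congr rfl fun i _ => hWsymm i j
      _ = 1 := hWrow j
  have hWle : ∀ x : Fin n → ℝ, ∑ i, (W.mulVec x i)^2 ≤ ∑ j, (x j)^2 := by
    intro x
    have hid := W_identity W hWrow hWcol x
    have h0 : 0 ≤ ∑ i, ∑ j, W i j * (x j - W.mulVec x i)^2 :=
      Finset.sum_nonneg fun i _ => Finset.sum_nonneg fun j _ =>
        mul_nonneg (hWnn i j) (sq_nonneg _)
    linarith
  have hWeq : ∀ x : Fin n → ℝ, ∑ i, (W.mulVec x i)^2 = ∑ j, (x j)^2 →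
      (∀ i, W.mulVec x i = x i) ∧ ∀ i j, x i = x j := by
    intro x heq
    have hres : ∑ i, ∑ j, W i j * (x j - W.mulVec x i)^2 = 0 := by
      have := W_identity W hWrow hWcol x; linarith
    have hterm : ∀ i j, W i j * (x j - W.mulVec x i)^2 = 0 := by
      intro i j
      have h1 := (Finset.sum_eq_zero_iff_of_nonneg (fun i _ => Finset.sum_nonneg fun j _ =>
        mul_nonneg (hWnn i j) (sq_nonneg (x j - W.mulVec x i)))).mp hres i (Finset.mem_univ i)
      exact (Finset.sum_eq_zero_iff_of_nonneg (fun j _ =>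
        mul_nonneg (hWnn i j) (sq_nonneg (x j - W.mulVec x i)))).mp h1 j (Finset.mem_univ j)
    have hpt : ∀ i j, 0 < W i j → x j = W.mulVec x i := by
      intro i j hpos
      rcases mul_eq_zero.mp (hterm i j) with h | h
      · exact absurd h (ne_of_gt hpos)
      · have := pow_eq_zero_iff (n := 2) (by norm_num) |>.mp h; linarith
    have hfix : ∀ i, W.mulVec x i = x i := fun i => (hpt i i (hWdiag i)).symm
    refine ⟨hfix, const_of_adj hG ?_⟩
    intro i j hadj
    have h1 : x j = W.mulVec x i := hpt i j (by rw [hWadj i j hadj]; exact hε0)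
    rw [h1, hfix i]
  -- structure of A
  have hAform : ∀ (u : Fin n × Fin d → ℝ) (i : Fin n) (a : Fin d),
      A.mulVec u (i, a) = (Pm i).mulVec (fun b => W.mulVec (fun j => u (j, b)) i) a := by
    intro u i a
    simp only [Matrix.mulVec, dotProduct]
    rw [Fintype.sum_prod_type, Finset.sum_comm]
    apply Finset.sum_congr rfl
    intro b _
    rw [Finset.mul_sum]
    apply Finset.sum_congr rfl
    intro j _
    rw [hA (i, a) (j, b)]
    ring
  -- the main real lemma
  have main : ∀ u : Fin n × Fin d → ℝ,
      (∑ p, (A.mulVec u p)^2 ≤ ∑ p, (u p)^2) ∧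
      (∑ p, (A.mulVec u p)^2 = ∑ p, (u p)^2 →
        A.mulVec u = u ∧ ∃ h : Fin d → ℝ, (∀ i, h ∈ L i) ∧ ∀ p, u p = h p.2) := by
    intro u
    set wv : Fin n → Fin d → ℝ := fun i b => W.mulVec (fun j => u (j, b)) i with hwv
    have hQA : ∑ p, (A.mulVec u p)^2 = ∑ i, ∑ a, ((Pm i).mulVec (wv i) a)^2 := by
      rw [Fintype.sum_prod_type]
      exact Finset.sum_congr rfl fun i _ => Finset.sum_congr rfl fun a _ => by
        rw [hAform u i a]
    have hQu : ∑ p, (u p)^2 = ∑ a, ∑ i, (u (i, a))^2 := by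
      rw [Fintype.sum_prod_type, Finset.sum_comm]
    have hQw : ∑ i, ∑ a, (wv i a)^2
        = ∑ a : Fin d, ∑ i, (W.mulVec (fun j => u (j, a)) i)^2 := Finset.sum_comm
    have h1 : ∀ i, ∑ a, ((Pm i).mulVec (wv i) a)^2 ≤ ∑ a, (wv i a)^2 :=
      fun i => proj_le (hP i) (wv i)
    have h2 : ∀ a : Fin d, ∑ i, (W.mulVec (fun j => u (j, a)) i)^2 ≤ ∑ i, (u (i, a))^2 :=
      fun a => hWle _
    have le1 : ∑ p, (A.mulVec u p)^2 ≤ ∑ i, ∑ a, (wv i a)^2 := by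
      rw [hQA]; exact Finset.sum_le_sum fun i _ => h1 i
    have le2 : ∑ i, ∑ a, (wv i a)^2 ≤ ∑ p, (u p)^2 := by
      rw [hQw, hQu]; exact Finset.sum_le_sum fun a _ => h2 a
    refine ⟨le_trans le1 le2, ?_⟩
    intro heq
    have e1 : ∑ p, (A.mulVec u p)^2 = ∑ i, ∑ a, (wv i a)^2 := le_antisymm le1 (by linarith)
    have e2 : ∑ i, ∑ a, (wv i a)^2 = ∑ p, (u p)^2 := le_antisymm le2 (by linarith)
    have e2' : ∀ a : Fin d,
        ∑ i, (W.mulVec (fun j => u (j, a)) i)^2 = ∑ i, (u (i, a))^2 := by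
      have := (Finset.sum_eq_sum_iff_of_le (fun a _ => h2 a)).mp (by rw [← hQw, ← hQu]; exact e2)
      exact fun a => this a (Finset.mem_univ a)
    have e1' : ∀ i, ∑ a, ((Pm i).mulVec (wv i) a)^2 = ∑ a, (wv i a)^2 := by
      have := (Finset.sum_eq_sum_iff_of_le (fun i _ => h1 i)).mp (by rw [← hQA]; exact e1)
      exact fun i => this i (Finset.mem_univ i)
    have hWx := fun a => hWeq _ (e2' a)
    have hfixW : ∀ i a, wv i a = u (i, a) := fun i a => (hWx a).1 i
    have hprojfix : ∀ i, (Pm i).mulVec (wv i) = wv i := fun i => proj_eq (hP i) (wv i) (e1' i)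
    set i0 : Fin n := ⟨0, hn⟩
    set h : Fin d → ℝ := fun a => u (i0, a) with hh
    have hconst : ∀ i a, u (i, a) = h a := fun i a => (hWx a).2 i i0
    have hwvh : ∀ i, wv i = h := by
      intro i; funext a; rw [hfixW i a, hconst i a]
    have hAu : A.mulVec u = u := by
      funext p
      obtain ⟨i, a⟩ := p
      rw [hAform u i a]
      show (Pm i).mulVec (wv i) a = u (i, a)
      rw [hprojfix i, hfixW i a]
    refine ⟨hAu, h, ?_, fun p => hconst p.1 p.2⟩
    intro i
    have hm := (hP i (wv i)).1
    rw [show (fun v => (Pm i).mulVec v) (wv i) = (Pm i).mulVec (wv i) from rfl,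
      hprojfix i, hwvh i] at hm
    exact hm
  constructor
  · -- eigenvalues
    intro lam heig hne1
    obtain ⟨v, hv⟩ := heig.exists_hasEigenvector
    have hv1 : (A.map (fun r => (r : ℂ))).mulVec v = lam • v :=
      Module.End.mem_eigenspace_iff.mp hv.1
    have hv0 : v ≠ 0 := hv.2
    set x : Fin n × Fin d → ℝ := fun p => (v p).re with hx
    set y : Fin n × Fin d → ℝ := fun p => (v p).im with hy
    have hlamv : ∀ p, (∑ q, ((A p q : ℂ)) * v q) = lam * v p := by
      intro p
      have := congr_fun hv1 p
      simpa [Matrix.mulVec, dotProduct, Matrix.map] using this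
    have hre : ∀ p, A.mulVec x p = (lam * v p).re := by
      intro p
      have h0 := congrArg Complex.re (hlamv p)
      rw [Complex.re_sum] at h0
      rw [← h0]
      simp [Matrix.mulVec, dotProduct, Complex.re_ofReal_mul, hx]
    have him : ∀ p, A.mulVec y p = (lam * v p).im := by
      intro p
      have h0 := congrArg Complex.im (hlamv p)
      rw [Complex.im_sum] at h0
      rw [← h0]
      simp [Matrix.mulVec, dotProduct, Complex.im_ofReal_mul, hy]
    have hsum : ∑ p, (A.mulVec x p)^2 + ∑ p, (A.mulVec y p)^2
        = Complex.normSq lam * (∑ p, (x p)^2 + ∑ p, (y p)^2) := by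
      rw [← Finset.sum_add_distrib, ← Finset.sum_add_distrib, Finset.mul_sum]
      apply Finset.sum_congr rfl
      intro p _
      rw [hre p, him p]
      have h1 : (lam * v p).re^2 + (lam * v p).im^2 = Complex.normSq (lam * v p) := by
        rw [Complex.normSq_apply]; ring
      rw [h1, Complex.normSq_mul]
      rw [Complex.normSq_apply (v p)]
      show Complex.normSq lam * ((v p).re * (v p).re + (v p).im * (v p).im)
        = Complex.normSq lam * ((v p).re^2 + (v p).im^2)
      ring
    obtain ⟨p0, hp0⟩ := Function.ne_iff.mp hv0
    simp only [Pi.zero_apply] at hp0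
    have hp0' : 0 < (x p0)^2 + (y p0)^2 := by
      rcases eq_or_ne (x p0) 0 with hx0 | hx0
      · have hy0 : y p0 ≠ 0 := by
          intro hy0
          exact hp0 (Complex.ext (by simpa [hx] using hx0) (by simpa [hy] using hy0))
        have : 0 < (y p0)^2 :=
          lt_of_le_of_ne (sq_nonneg _) (Ne.symm (pow_ne_zero 2 hy0))
        nlinarith [sq_nonneg (x p0)]
      · have : 0 < (x p0)^2 :=
          lt_of_le_of_ne (sq_nonneg _) (Ne.symm (pow_ne_zero 2 hx0))
        nlinarith [sq_nonneg (y p0)]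
    have hNpos : 0 < ∑ p, (x p)^2 + ∑ p, (y p)^2 := by
      have h1 : 0 < ∑ p, ((x p)^2 + (y p)^2) :=
        Finset.sum_pos' (fun p _ => add_nonneg (sq_nonneg _) (sq_nonneg _))
          ⟨p0, Finset.mem_univ p0, hp0'⟩
      rw [Finset.sum_add_distrib] at h1
      exact h1
    have hle : Complex.normSq lam * (∑ p, (x p)^2 + ∑ p, (y p)^2)
        ≤ ∑ p, (x p)^2 + ∑ p, (y p)^2 := by
      rw [← hsum]
      have := (main x).1
      have := (main y).1
      linarith
    have hns1 : Complex.normSq lam ≤ 1 := by nlinarith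
    have habs : ‖lam‖ ≤ 1 := by
      have h1 : ‖lam‖^2 = Complex.normSq lam := by
        rw [Complex.sq_norm]
      nlinarith [norm_nonneg lam]
    rcases lt_or_eq_of_le habs with hlt | heq1
    · exact hlt
    · exfalso
      have hns : Complex.normSq lam = 1 := by
        have h1 : ‖lam‖^2 = Complex.normSq lam := by
          rw [Complex.sq_norm]
        rw [← h1, heq1]; norm_num
      have hQeq : ∑ p, (A.mulVec x p)^2 + ∑ p, (A.mulVec y p)^2
          = ∑ p, (x p)^2 + ∑ p, (y p)^2 := by
        rw [hsum, hns, one_mul]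
      have hex : ∑ p, (A.mulVec x p)^2 = ∑ p, (x p)^2 := by
        have := (main x).1; have := (main y).1; linarith
      have hey : ∑ p, (A.mulVec y p)^2 = ∑ p, (y p)^2 := by
        have := (main x).1; have := (main y).1; linarith
      have hAx : A.mulVec x = x := ((main x).2 hex).1
      have hAy : A.mulVec y = y := ((main y).2 hey).1
      have hfix : ∀ p, lam * v p = v p := by
        intro p
        apply Complex.ext
        · rw [← hre p, hAx]
        · rw [← him p, hAy]
      have : (lam - 1) * v p0 = 0 := by
        have := hfix p0; ring_nf; linear_combination this
      rcases mul_eq_zero.mp this with h | h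
      · exact hne1 (by linear_combination h)
      · exact hp0 h
  · -- fixed vectors
    intro u hu
    have heq : ∑ p, (A.mulVec u p)^2 = ∑ p, (u p)^2 := by rw [hu]
    exact ((main u).2 heq).2
end
end
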